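/- A flow of a metric space X is topological expansive if and only if it is rescaling expansive and all its singularities are isolated points of X. -/

import Mathlib

open Set Metric

def IsFlow {X : Type*} [TopologicalSpace X] (φ : ℝ → X → X) : Prop :=
  (∀ x, φ 0 x = x) ∧ (∀ s t x, φ (s + t) x = φ s (φ t x)) ∧
    Continuous (fun p : ℝ × X => φ p.1 p.2)

def TopExpansive {X : Type*} [MetricSpace X] (φ : ℝ → X → X) : Prop :=
  ∀ ε : ℝ, 0 < ε → ∃ δ : X → ℝ, Continuous δ ∧ (∀ x, 0 < δ x) ∧
    ∀ x y : X, ∀ α : ℝ → ℝ, Continuous α → α 0 = 0 →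
      (∀ t : ℝ, dist (φ t x) (φ (α t) y) < δ (φ t x)) →
      ∃ s ∈ Set.Icc (-ε) ε, φ s x = y

def ExpansiveFlow {X : Type*} [MetricSpace X] (φ : ℝ → X → X) : Prop :=
  ∀ ε : ℝ, 0 < ε → ∃ δ : ℝ, 0 < δ ∧
    ∀ x y : X, ∀ α : ℝ → ℝ, Continuous α → α 0 = 0 →
      (∀ t : ℝ, dist (φ t x) (φ (α t) y) < δ) →
      ∃ s ∈ Set.Icc (-ε) ε, φ s x = y

def TopExpansiveOn {X : Type*} [MetricSpace X] (φ : ℝ → X → X) (A : Set X) : Prop :=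
  ∀ ε : ℝ, 0 < ε → ∃ δ : X → ℝ, ContinuousOn δ A ∧ (∀ x ∈ A, 0 < δ x) ∧
    ∀ x ∈ A, ∀ y ∈ A, ∀ α : ℝ → ℝ, Continuous α → α 0 = 0 →
      (∀ t : ℝ, dist (φ t x) (φ (α t) y) < δ (φ t x)) →
      ∃ s ∈ Set.Icc (-ε) ε, φ s x = y

def RescalingExpansive {X : Type*} [MetricSpace X] (φ : ℝ → X → X) : Prop :=
  ∀ ε : ℝ, 0 < ε → ∃ δ : X → ℝ, Continuous δ ∧ (∀ x, 0 ≤ δ x) ∧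
    (∀ x, δ x = 0 ↔ ∀ t : ℝ, φ t x = x) ∧
    ∀ x y : X, ∀ α : ℝ → ℝ, Continuous α → α 0 = 0 →
      (∀ t : ℝ, dist (φ t x) (φ (α t) y) ≤ δ (φ t x)) →
      ∃ s ∈ Set.Icc (-ε) ε, φ s x = y

theorem stmt15 {X : Type*} [MetricSpace X] (φ : ℝ → X → X)
    (hflow : IsFlow φ) :
    TopExpansive φ ↔
      (RescalingExpansive φ ∧
        ∀ x : X, (∀ t : ℝ, φ t x = x) → ∃ ρ : ℝ, 0 < ρ ∧ Metric.ball x ρ = {x}) := by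
  classical
  obtain ⟨h0, hadd, hcont⟩ := hflow
  set S : Set X := {x | ∀ t : ℝ, φ t x = x} with hSdef
  have hcont_t : ∀ t : ℝ, Continuous fun x => φ t x := fun t =>
    hcont.comp (continuous_const.prodMk continuous_id)
  have horb : ∀ (x : X) (t : ℝ), φ t x ∈ S → x ∈ S := by
    intro x t hz
    have key : φ t x = x := by
      have h1 := hz (-t)
      rw [← hadd (-t) t x, neg_add_cancel, h0] at h1
      exact h1.symm
    intro s
    calc φ s x = φ s (φ t x) := by rw [key]
      _ = φ t x := hz s
      _ = x := key
  constructor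
  · intro htop
    have hiso : ∀ x : X, (∀ t : ℝ, φ t x = x) → ∃ ρ : ℝ, 0 < ρ ∧ Metric.ball x ρ = {x} := by
      intro x hx
      obtain ⟨δ, hδc, hδpos, hδ⟩ := htop 1 one_pos
      refine ⟨δ x, hδpos x, ?_⟩
      ext y
      simp only [mem_ball, mem_singleton_iff]
      constructor
      · intro hy
        obtain ⟨s, _, hs⟩ := hδ x y (fun _ => 0) continuous_const rfl
          (fun t => by rw [hx t, h0 y, dist_comm]; exact hy)
        rw [← hs, hx s]
      · intro h
        rw [h]
        simpa using hδpos x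
    refine ⟨?_, hiso⟩
    intro ε hε
    obtain ⟨δ, hδc, hδpos, hδ⟩ := htop ε hε
    have hSopen : IsOpen S := by
      rw [Metric.isOpen_iff]
      intro x hx
      obtain ⟨ρ, hρ, hball⟩ := hiso x hx
      exact ⟨ρ, hρ, by rw [hball]; exact singleton_subset_iff.2 hx⟩
    have hSclosed : IsClosed S := by
      have : S = ⋂ t : ℝ, {x : X | φ t x = x} := by
        ext z; simp [hSdef]
      rw [this]
      exact isClosed_iInter fun t => isClosed_eq (hcont_t t) continuous_id
    have hfront : frontier S = ∅ := isClopen_iff_frontier_eq_empty.mp ⟨hSclosed, hSopen⟩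
    refine ⟨fun x => if x ∈ S then 0 else δ x / 2, ?_, ?_, ?_, ?_⟩
    · apply Continuous.if ?_ continuous_const (hδc.div_const 2)
      intro a ha
      exfalso
      have : a ∈ frontier S := by simpa using ha
      rw [hfront] at this
      exact this
    · intro x
      dsimp only
      split_ifs with h
      · exact le_refl 0
      · exact (div_pos (hδpos x) two_pos).le
    · intro x
      dsimp only
      split_ifs with h
      · exact iff_of_true rfl h
      · exact iff_of_false (div_pos (hδpos x) two_pos).ne' h
    · intro x y α hαc hα0 hd
      by_cases hx : x ∈ S
      · have h1 := hd 0
        dsimp only at h1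
        rw [h0, hα0, h0, if_pos hx] at h1
        exact ⟨0, ⟨neg_nonpos.mpr hε.le, hε.le⟩, by rw [h0]; exact dist_le_zero.mp h1⟩
      · apply hδ x y α hαc hα0
        intro t
        have h1 := hd t
        dsimp only at h1
        rw [if_neg (fun hz => hx (horb x t hz))] at h1
        exact lt_of_le_of_lt h1 (half_lt_self (hδpos _))
  · rintro ⟨hres, hiso⟩
    intro ε hε
    by_cases hsub : ∀ a b : X, a = b
    · exact ⟨fun _ => 1, continuous_const, fun _ => one_pos,
        fun x y α _ _ _ => ⟨0, ⟨neg_nonpos.mpr hε.le, hε.le⟩, (h0 x).trans (hsub x y)⟩⟩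
    push_neg at hsub
    obtain ⟨a, b, hab⟩ := hsub
    have hne : ∀ x : X, ({x}ᶜ : Set X).Nonempty := by
      intro x
      by_cases h : x = a
      · exact ⟨b, by simp [h, Ne.symm hab]⟩
      · exact ⟨a, by simp [Ne.symm h]⟩
    set r : X → ℝ := fun x => infDist x ({x}ᶜ) with hrdef
    have hrcont : Continuous r := by
      refine LipschitzWith.continuous (K := 1) (LipschitzWith.of_dist_le_mul ?_)
      intro p q
      rcases eq_or_ne p q with h | h
      · simp [h]
      have h1 : r p ≤ dist p q := infDist_le_dist_of_mem (by simpa using h.symm)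
      have h2 : r q ≤ dist q p := infDist_le_dist_of_mem (by simpa using h)
      have hp : 0 ≤ r p := infDist_nonneg
      have hq : 0 ≤ r q := infDist_nonneg
      rw [NNReal.coe_one, one_mul, Real.dist_eq, abs_sub_le_iff]
      constructor
      · calc r p - r q ≤ r p := by linarith
          _ ≤ dist p q := h1
      · calc r q - r p ≤ r q := by linarith
          _ ≤ dist q p := h2
          _ = dist p q := dist_comm q p
    obtain ⟨δ, hδc, hδnn, hδ0, hδ⟩ := hres ε hε
    have hrpos : ∀ x ∈ S, 0 < r x := by
      intro x hx
      obtain ⟨ρ, hρ, hball⟩ := hiso x hx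
      refine lt_of_lt_of_le hρ (le_of_not_gt fun hlt => ?_)
      obtain ⟨z, hz, hdz⟩ := (infDist_lt_iff (hne x)).mp hlt
      have : z ∈ Metric.ball x ρ := by rw [mem_ball, dist_comm]; exact hdz
      rw [hball] at this
      exact hz this
    have hSopen : IsOpen S := by
      rw [Metric.isOpen_iff]
      intro x hx
      obtain ⟨ρ, hρ, hball⟩ := hiso x hx
      exact ⟨ρ, hρ, by rw [hball]; exact singleton_subset_iff.2 hx⟩
    have hSclosed : IsClosed S := by
      have : S = ⋂ t : ℝ, {x : X | φ t x = x} := by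
        ext z; simp [hSdef]
      rw [this]
      exact isClosed_iInter fun t => isClosed_eq (hcont_t t) continuous_id
    have hfront : frontier S = ∅ := isClopen_iff_frontier_eq_empty.mp ⟨hSclosed, hSopen⟩
    refine ⟨fun x => if x ∈ S then r x else δ x, ?_, ?_, ?_⟩
    · apply Continuous.if ?_ hrcont hδc
      intro c hc
      exfalso
      have : c ∈ frontier S := by simpa using hc
      rw [hfront] at this
      exact this
    · intro x
      dsimp only
      split_ifs with h
      · exact hrpos x h
      · exact lt_of_le_of_ne (hδnn x) (fun h' => h ((hδ0 x).mp h'.symm))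
    · intro x y α hαc hα0 hd
      by_cases hx : x ∈ S
      · have h1 := hd 0
        dsimp only at h1
        rw [h0, hα0, h0, if_pos hx] at h1
        refine ⟨0, ⟨neg_nonpos.mpr hε.le, hε.le⟩, ?_⟩
        rw [h0]
        by_contra hxy
        have : r x ≤ dist x y := infDist_le_dist_of_mem (by simpa using Ne.symm hxy)
        linarith
      · apply hδ x y α hαc hα0
        intro t
        have h1 := hd t
        dsimp only at h1
        rw [if_neg (fun hz => hx (horb x t hz))] at h1
        exact h1.le
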